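/- Let O be an occurrence net, viewed as a safe Petri net with initial marking C0, and let 𝒞 be a finite set of events. Then 𝒞 is a configuration of O if and only if the elements of 𝒞 can be arranged into a sequence e_1, …, e_n that is a firing sequence of O starting from C0; moreover, for a finite configuration 𝒞 any such firing sequence leads from C0 to the marking Cut(𝒞). -/

import Mathlib

open scoped Classical

/-- A Petri net over places `P` and transitions `T`, with markings as functions `P → ℕ`
and the flow relation given by presets and postsets of transitions. -/
structure PetriNet (P : Type*) (T : Type*) where
  /-- `pre t p` means `p ∈ •t`, i.e. `(p,t)` is in the flow relation. -/
  pre : T → P → Prop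
  /-- `post t p` means `p ∈ t•`, i.e. `(t,p)` is in the flow relation. -/
  post : T → P → Prop
  /-- the initial marking -/
  M0 : P → ℕ

namespace PetriNet

variable {P : Type*} {T : Type*}

/-- A transition is enabled at a marking if every place of its preset is marked. -/
def enabled (N : PetriNet P T) (M : P → ℕ) (t : T) : Prop :=
  ∀ p, N.pre t p → 1 ≤ M p

/-- Firing a transition consumes a token from each place of the preset and
produces a token on each place of the postset. -/
noncomputable def fire (N : PetriNet P T) (M : P → ℕ) (t : T) : P → ℕ :=
  fun p => M p - (if N.pre t p then 1 else 0) + (if N.post t p then 1 else 0)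

/-- `FireSeq N M l M'` : the finite sequence `l` of transitions can be fired from `M`,
leading to `M'`. -/
inductive FireSeq (N : PetriNet P T) : (P → ℕ) → List T → (P → ℕ) → Prop
  | nil (M : P → ℕ) : FireSeq N M [] M
  | cons {M M' : P → ℕ} {t : T} {l : List T} :
      N.enabled M t → FireSeq N (N.fire M t) l M' → FireSeq N M (t :: l) M'

/-- A marking is reachable if some finite firing sequence from `M0` reaches it. -/
def Reachable (N : PetriNet P T) (M : P → ℕ) : Prop :=
  ∃ l : List T, FireSeq N N.M0 l M

/-- A net is safe if no reachable marking puts more than one token into any place. -/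
def Safe (N : PetriNet P T) : Prop :=
  ∀ M, N.Reachable M → ∀ p, M p ≤ 1

/-- A (finite or infinite) run of a Petri net: a firing sequence from the initial
marking.  `len = ⊤` means the run is infinite; for finite runs only the indices
`i < len` carry transitions. -/
structure Run (N : PetriNet P T) where
  /-- length of the run (`⊤` = infinite) -/
  len : ℕ∞
  /-- the transition fired at step `i` (meaningful for `i < len`) -/
  seq : ℕ → T
  /-- the marking before step `i` -/
  marks : ℕ → (P → ℕ)
  init : marks 0 = N.M0
  enabled_step : ∀ i : ℕ, (i : ℕ∞) < len → N.enabled (marks i) (seq i)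
  fire_step : ∀ i : ℕ, (i : ℕ∞) < len → marks (i + 1) = N.fire (marks i) (seq i)

/-- A transition occurs in a run if it is fired at some step of the run. -/
def Run.occurs {N : PetriNet P T} (σ : N.Run) (t : T) : Prop :=
  ∃ i : ℕ, (i : ℕ∞) < σ.len ∧ σ.seq i = t

/-- A run is fair iff it is finite and ends in a marking enabling no transition, or
it is infinite and no transition remains enabled from some point on while being
fired only finitely often thereafter. -/
def Run.Fair {N : PetriNet P T} (σ : N.Run) : Prop :=
  (∃ n : ℕ, σ.len = (n : ℕ∞) ∧ ∀ t, ¬ N.enabled (σ.marks n) t) ∨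
  (σ.len = ⊤ ∧ ¬ ∃ (t : T) (i : ℕ),
      (∀ k, i ≤ k → N.enabled (σ.marks k) t) ∧ (∀ k, i ≤ k → σ.seq k ≠ t))

section OccurrenceNet

variable {C : Type*} {E : Type*}

/-- The flow relation, as a relation on nodes (conditions `C` and events `E`). -/
def flow (O : PetriNet C E) : (C ⊕ E) → (C ⊕ E) → Prop
  | Sum.inl c, Sum.inr e => O.pre e c
  | Sum.inr e, Sum.inl c => O.post e c
  | _, _ => False

/-- Causality `<` on nodes: the transitive closure of the flow relation. -/
def nlt (O : PetriNet C E) : (C ⊕ E) → (C ⊕ E) → Prop :=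
  Relation.TransGen O.flow

/-- `≤` on nodes: the reflexive-transitive closure of the flow relation. -/
def nle (O : PetriNet C E) : (C ⊕ E) → (C ⊕ E) → Prop :=
  Relation.ReflTransGen O.flow

/-- Conflict `x # x'` between two nodes. -/
def Conflict (O : PetriNet C E) (x x' : C ⊕ E) : Prop :=
  ∃ e e' : E, e ≠ e' ∧ (∃ c : C, O.pre e c ∧ O.pre e' c) ∧
    O.nle (Sum.inr e) x ∧ O.nle (Sum.inr e') x'

/-- Causality `<` restricted to events. -/
def elt (O : PetriNet C E) (e e' : E) : Prop :=
  O.nlt (Sum.inr e) (Sum.inr e')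

/-- `≤` restricted to events. -/
def ele (O : PetriNet C E) (e e' : E) : Prop :=
  e = e' ∨ O.elt e e'

/-- Conflict restricted to events. -/
def econflict (O : PetriNet C E) (e e' : E) : Prop :=
  O.Conflict (Sum.inr e) (Sum.inr e')

/-- The cone `⌈e⌉` of an event: all events `e' ≤ e`. -/
def cone (O : PetriNet C E) (e : E) : Set E :=
  {e' | O.ele e' e}

/-- `O` is an occurrence net. -/
structure IsOccurrenceNet (O : PetriNet C E) : Prop where
  /-- no self-conflict -/
  no_self_conflict : ∀ x : C ⊕ E, ¬ O.Conflict x x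
  /-- `<` is acyclic -/
  acyclic : ∀ x : C ⊕ E, ¬ O.nlt x x
  /-- all cones are finite -/
  finite_cones : ∀ e : E, (O.cone e).Finite
  /-- no backward branching: `|•c| ≤ 1` -/
  no_backward_branching : ∀ (c : C) (e e' : E), O.post e c → O.post e' c → e = e'
  /-- the initial marking `C0` is exactly the set of `≤`-minimal conditions -/
  init_minimal : ∀ c : C, O.M0 c = (if ∀ e : E, ¬ O.post e c then 1 else 0)
  /-- no event is `≤`-minimal (the minimal nodes are conditions) -/
  events_not_minimal : ∀ e : E, ∃ c : C, O.pre e c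

/-- A configuration: a downward-closed, conflict-free set of events. -/
def IsConfiguration (O : PetriNet C E) (𝒞 : Set E) : Prop :=
  (∀ e ∈ 𝒞, ∀ e' : E, O.elt e' e → e' ∈ 𝒞) ∧
  (∀ e ∈ 𝒞, ∀ e' ∈ 𝒞, ¬ O.econflict e e')

/-- The cut of a configuration: `(C0 ∪ 𝒞•) \ •𝒞`. -/
def Cut (O : PetriNet C E) (𝒞 : Set E) : Set C :=
  {c | (1 ≤ O.M0 c ∨ ∃ e ∈ 𝒞, O.post e c) ∧ ¬ ∃ e ∈ 𝒞, O.pre e c}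

/-- A maximal configuration (w.r.t. set inclusion). -/
def MaximalConfiguration (O : PetriNet C E) (𝒞 : Set E) : Prop :=
  O.IsConfiguration 𝒞 ∧ ∀ 𝒟 : Set E, O.IsConfiguration 𝒟 → 𝒞 ⊆ 𝒟 → 𝒟 = 𝒞

/-- `e` reveals `e'` (`e ▷ e'`): every fair run containing `e` also contains `e'`. -/
def Reveals (O : PetriNet C E) (e e' : E) : Prop :=
  ∀ σ : O.Run, σ.Fair → σ.occurs e → σ.occurs e'

/-- Direct causal predecessor relation among events: `e ∈ •(•e')`. -/
def dpred (O : PetriNet C E) (e e' : E) : Prop :=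
  ∃ c : C, O.post e c ∧ O.pre e' c

/-- The height `H(e) = 1 + max { H(e') : e' ∈ •(•e) }` (with `max ∅ = 0`), expressed
as the maximal number of events on a chain of direct causal predecessors ending in `e`. -/
noncomputable def height (O : PetriNet C E) (e : E) : ℕ :=
  sSup {n : ℕ | 1 ≤ n ∧ ∃ f : ℕ → E, f (n - 1) = e ∧
    ∀ i : ℕ, i + 1 < n → O.dpred (f i) (f (i + 1))}

/-- The height of a prefix, given by its set of events: the maximal height of an event. -/
noncomputable def prefixHeight (O : PetriNet C E) (Es : Set E) : ℕ :=
  sSup (O.height '' Es)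

/-- Two conditions are concurrent iff some configuration has both in its cut. -/
def concurrentC (O : PetriNet C E) (c c' : C) : Prop :=
  ∃ 𝒞 : Set E, O.IsConfiguration 𝒞 ∧ c ∈ O.Cut 𝒞 ∧ c' ∈ O.Cut 𝒞

/-- A co-set: a set of pairwise concurrent conditions. -/
def CoSet (O : PetriNet C E) (D : Set C) : Prop :=
  ∀ c ∈ D, ∀ c' ∈ D, c ≠ c' → O.concurrentC c c'

end OccurrenceNet

end PetriNet

/-- An unfolding of the safe Petri net `N`: an occurrence net (with conditions `C` and
events `E`) together with a folding map (given by `fC` on conditions and `fE` on events)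
satisfying the usual properties. -/
structure Unfolding {P T : Type*} (C E : Type*) (N : PetriNet P T) where
  /-- the underlying occurrence net -/
  net : PetriNet C E
  occ : net.IsOccurrenceNet
  /-- the folding map on conditions -/
  fC : C → P
  /-- the folding map on events -/
  fE : E → T
  /-- `f` restricts to a bijection from `C0` to `M0` -/
  init_maps : ∀ c, 1 ≤ net.M0 c → 1 ≤ N.M0 (fC c)
  init_inj : ∀ c c', 1 ≤ net.M0 c → 1 ≤ net.M0 c' → fC c = fC c' → c = c'
  init_surj : ∀ p, 1 ≤ N.M0 p → ∃ c, 1 ≤ net.M0 c ∧ fC c = p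
  /-- for every co-set `D` and transition `t` such that `f` is a bijection from `D`
  to `•t`, there is exactly one event `e` with `f e = t` and `•e = D` -/
  coset_event : ∀ (D : Set C) (t : T), net.CoSet D →
      (∀ c ∈ D, N.pre t (fC c)) → Set.InjOn fC D →
      (∀ p, N.pre t p → ∃ c ∈ D, fC c = p) →
      ∃! e : E, fE e = t ∧ ∀ c, net.pre e c ↔ c ∈ D
  /-- `f` restricts to a bijection from `•e` to `•(f e)` -/
  pre_maps : ∀ e c, net.pre e c → N.pre (fE e) (fC c)
  pre_inj : ∀ e c c', net.pre e c → net.pre e c' → fC c = fC c' → c = c'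
  pre_surj : ∀ e p, N.pre (fE e) p → ∃ c, net.pre e c ∧ fC c = p
  /-- `f` restricts to a bijection from `e•` to `(f e)•` -/
  post_maps : ∀ e c, net.post e c → N.post (fE e) (fC c)
  post_inj : ∀ e c c', net.post e c → net.post e c' → fC c = fC c' → c = c'
  post_surj : ∀ e p, N.post (fE e) p → ∃ c, net.post e c ∧ fC c = p

namespace Unfolding

variable {P T C E : Type*} {N : PetriNet P T}

/-- The marking (as a set of places) associated with a configuration:
`Mark(𝒞) = f(Cut(𝒞))`. -/
def Mark (V : Unfolding C E N) (𝒞 : Set E) : Set P :=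
  V.fC '' V.net.Cut 𝒞

/-- The marking associated with a configuration, as a function `P → ℕ`. -/
noncomputable def MarkFun (V : Unfolding C E N) (𝒞 : Set E) : P → ℕ :=
  (V.Mark 𝒞).indicator fun _ => 1

/-- `M_e := Mark(⌈e⌉)`. -/
def Me (V : Unfolding C E N) (e : E) : Set P :=
  V.Mark (V.net.cone e)

/-- The level-`i` cutoffs `L_i` (with `L_0 = ∅`):
`e ∈ L_1` iff `M_e = M_0` or some `e' < e` has `M_{e'} = M_e`;
for `i > 1`, `e ∈ L_i` iff some `e' ∈ L_{i-1}` has `e' < e` and `M_{e'} = M_e`. -/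
def levelCut (V : Unfolding C E N) : ℕ → Set E
  | 0 => ∅
  | 1 => {e | V.Me e = {p | 1 ≤ N.M0 p} ∨ ∃ e', V.net.elt e' e ∧ V.Me e' = V.Me e}
  | (i + 2) => {e | ∃ e' ∈ V.levelCut (i + 1), V.net.elt e' e ∧ V.Me e' = V.Me e}

/-- The events of the level-`i` prefix `U_i`: the downward closure of the
`≤`-minimal events of `L_i`. -/
def levelEvents (V : Unfolding C E N) (i : ℕ) : Set E :=
  {e | ∃ e', (e' ∈ V.levelCut i ∧ ∀ e'' ∈ V.levelCut i, ¬ V.net.elt e'' e') ∧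
    V.net.ele e e'}

end Unfolding

section Aux

open PetriNet

variable {C E : Type}

private lemma fireSeq_append' {P T : Type*} {N : PetriNet P T} {M M' M'' : P → ℕ}
    {l1 l2 : List T} (h1 : FireSeq N M l1 M') (h2 : FireSeq N M' l2 M'') :
    FireSeq N M (l1 ++ l2) M'' := by
  induction h1 with
  | nil => simpa
  | cons he _ ih => exact FireSeq.cons he (ih h2)

private lemma fireSeq_snoc' {P T : Type*} {N : PetriNet P T} {M M'' : P → ℕ}
    {l : List T} {t : T} (h : FireSeq N M (l ++ [t]) M'') :
    ∃ M', FireSeq N M l M' ∧ N.enabled M' t ∧ M'' = N.fire M' t := by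
  induction l generalizing M with
  | nil =>
    rcases h with _ | ⟨he, htail⟩
    cases htail
    exact ⟨M, FireSeq.nil M, he, rfl⟩
  | cons a l ih =>
    rcases h with _ | ⟨he, htail⟩
    obtain ⟨M', h1, h2, h3⟩ := ih htail
    exact ⟨M', FireSeq.cons he h1, h2, h3⟩

private lemma fireSeq_count' {P T : Type*} {N : PetriNet P T} {M M' : P → ℕ}
    {l : List T} (h : FireSeq N M l M') (p : P) :
    M' p + l.countP (fun t => decide (N.pre t p)) =
      M p + l.countP (fun t => decide (N.post t p)) := by
  induction l generalizing M with
  | nil => cases h; rfl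
  | cons t l ih =>
    rcases h with _ | ⟨he, htail⟩
    have ih' := ih htail
    simp only [List.countP_cons, decide_eq_true_eq]
    simp only [PetriNet.fire] at ih'
    by_cases hpre : N.pre t p
    · have hM := he p hpre
      by_cases hpost : N.post t p <;> simp only [hpre, hpost, if_true, if_false] at ih' ⊢ <;>
        omega
    · by_cases hpost : N.post t p <;> simp only [hpre, hpost, if_true, if_false] at ih' ⊢ <;>
        omega

private lemma countP_unique' {α : Type*} (p : α → Prop) :
    ∀ (l : List α), l.Nodup → (∀ a ∈ l, ∀ b ∈ l, p a → p b → a = b) →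
      l.countP (fun a => decide (p a)) = if ∃ a ∈ l, p a then 1 else 0
  | [], _, _ => by simp
  | a :: l, hnd, hu => by
    have hnd' := (List.nodup_cons.mp hnd).2
    have hrec := countP_unique' p l hnd'
      (fun x hx y hy => hu x (List.mem_cons_of_mem _ hx) y (List.mem_cons_of_mem _ hy))
    rw [List.countP_cons]
    by_cases hpa : p a
    · have h0 : l.countP (fun a => decide (p a)) = 0 := by
        rw [List.countP_eq_zero]
        intro b hb
        simp only [decide_eq_true_eq]
        intro hpb
        have hba := hu a List.mem_cons_self b (List.mem_cons_of_mem _ hb) hpa hpb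
        exact (List.nodup_cons.mp hnd).1 (hba ▸ hb)
      simp [hpa, h0]
    · have hiff : (∃ x ∈ a :: l, p x) ↔ ∃ x ∈ l, p x := by
        simp only [List.mem_cons]
        constructor
        · rintro ⟨x, hx | hx, hpx⟩
          · exact absurd (hx ▸ hpx) hpa
          · exact ⟨x, hx, hpx⟩
        · rintro ⟨x, hx, hpx⟩; exact ⟨x, Or.inr hx, hpx⟩
      simp [hpa, hrec, hiff]

private lemma conf_pre_unique' (O : PetriNet C E) {𝒞 : Set E} (hc : O.IsConfiguration 𝒞)
    {e e' : E} {c : C} (he : e ∈ 𝒞) (he' : e' ∈ 𝒞) (h1 : O.pre e c)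
    (h2 : O.pre e' c) : e = e' := by
  by_contra hne
  exact hc.2 e he e' he' ⟨e, e', hne, ⟨c, h1, h2⟩,
    Relation.ReflTransGen.refl, Relation.ReflTransGen.refl⟩

private lemma elt_of_post_pre' (O : PetriNet C E) {e e' : E} {c : C}
    (h1 : O.post e c) (h2 : O.pre e' c) : O.elt e e' :=
  (Relation.TransGen.single (show O.flow (Sum.inl c) (Sum.inr e') from h2)).head
    (show O.flow (Sum.inr e) (Sum.inl c) from h1)

/-- Any nodup firing sequence enumerating a configuration reaches the cut marking. -/
private lemma markB' (O : PetriNet C E) (hO : O.IsOccurrenceNet) (𝒞 : Set E)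
    (hc : O.IsConfiguration 𝒞) (l : List E) (M : C → ℕ)
    (hnd : l.Nodup) (hset : {e | e ∈ l} = 𝒞) (hfs : O.FireSeq O.M0 l M) :
    M = (O.Cut 𝒞).indicator fun _ => 1 := by
  funext c
  have hmem : ∀ e : E, e ∈ l ↔ e ∈ 𝒞 := fun e => by
    rw [← hset]; rfl
  have hcount := fireSeq_count' hfs c
  have hpre : l.countP (fun t => decide (O.pre t c)) = if ∃ e ∈ 𝒞, O.pre e c then 1 else 0 := by
    rw [countP_unique' _ l hnd (fun a ha b hb hpa hpb =>
      conf_pre_unique' O hc ((hmem a).mp ha) ((hmem b).mp hb) hpa hpb)]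
    simp only [hmem]
  have hpost : l.countP (fun t => decide (O.post t c)) =
      if ∃ e ∈ 𝒞, O.post e c then 1 else 0 := by
    rw [countP_unique' _ l hnd (fun a _ b _ hpa hpb =>
      hO.no_backward_branching c a b hpa hpb)]
    simp only [hmem]
  rw [hpre, hpost] at hcount
  have hinit := hO.init_minimal c
  rw [Set.indicator_apply]
  have hcutIff : c ∈ O.Cut 𝒞 ↔ (1 ≤ O.M0 c ∨ ∃ e ∈ 𝒞, O.post e c) ∧
      ¬ ∃ e ∈ 𝒞, O.pre e c := Iff.rfl
  by_cases hB : ∃ e ∈ 𝒞, O.pre e c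
  · have hcut : c ∉ O.Cut 𝒞 := fun h => h.2 hB
    rw [if_neg hcut, if_pos hB] at *
    by_cases h0 : ∀ e : E, ¬ O.post e c
    · have hA : ¬ ∃ e ∈ 𝒞, O.post e c := by rintro ⟨e, -, hp⟩; exact h0 e hp
      rw [if_pos h0] at hinit
      rw [if_neg hA] at hcount
      omega
    · push_neg at h0
      obtain ⟨e0, hp0⟩ := h0
      obtain ⟨e, he, hpe⟩ := hB
      have he0 : e0 ∈ 𝒞 := hc.1 e he e0 (elt_of_post_pre' O hp0 hpe)
      have hA : ∃ e ∈ 𝒞, O.post e c := ⟨e0, he0, hp0⟩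
      rw [if_neg (by push_neg; exact ⟨e0, hp0⟩ : ¬ ∀ e : E, ¬ O.post e c)] at hinit
      rw [if_pos hA] at hcount
      omega
  · rw [if_neg hB] at hcount
    by_cases h0 : ∀ e : E, ¬ O.post e c
    · have hA : ¬ ∃ e ∈ 𝒞, O.post e c := by rintro ⟨e, -, hp⟩; exact h0 e hp
      rw [if_pos h0] at hinit
      rw [if_neg hA] at hcount
      have hcut : c ∈ O.Cut 𝒞 := ⟨Or.inl (by omega), hB⟩
      rw [if_pos hcut]
      omega
    · push_neg at h0
      obtain ⟨e0, hp0⟩ := h0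
      rw [if_neg (by push_neg; exact ⟨e0, hp0⟩ : ¬ ∀ e : E, ¬ O.post e c)] at hinit
      by_cases hA : ∃ e ∈ 𝒞, O.post e c
      · have hcut : c ∈ O.Cut 𝒞 := ⟨Or.inr hA, hB⟩
        rw [if_pos hA] at hcount
        rw [if_pos hcut]
        omega
      · have hcut : c ∉ O.Cut 𝒞 := by
          intro h
          rcases h.1 with h1 | h1
          · omega
          · exact hA h1
        rw [if_neg hA] at hcount
        rw [if_neg hcut]
        omega

private lemma exists_maximal' {α : Type*} (r : α → α → Prop)
    (htr : ∀ {a b c}, r a b → r b c → r a c) (hirr : ∀ a, ¬ r a a) :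
    ∀ s : Finset α, s.Nonempty → ∃ a ∈ s, ∀ b ∈ s, ¬ r a b := by
  intro s
  induction s using Finset.strongInduction with
  | _ s ih =>
    intro hs
    obtain ⟨a, ha⟩ := hs
    by_cases hmax : ∀ b ∈ s, ¬ r a b
    · exact ⟨a, ha, hmax⟩
    · push_neg at hmax
      obtain ⟨b, hb, hrab⟩ := hmax
      have hss : s.filter (fun x => r a x) ⊂ s := by
        refine ⟨Finset.filter_subset _ _, fun hsub => ?_⟩
        have : a ∈ s.filter (fun x => r a x) := hsub ha
        exact hirr a (Finset.mem_filter.mp this).2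
      have hne : (s.filter (fun x => r a x)).Nonempty :=
        ⟨b, Finset.mem_filter.mpr ⟨hb, hrab⟩⟩
      obtain ⟨m, hm, hmmax⟩ := ih _ hss hne
      refine ⟨m, (Finset.filter_subset _ _) hm, fun d hd hrmd => ?_⟩
      have ham : r a m := (Finset.mem_filter.mp hm).2
      exact hmmax d (Finset.mem_filter.mpr ⟨hd, htr ham hrmd⟩) hrmd

/-- Forward direction: every finite configuration has a firing sequence. -/
private lemma key' (O : PetriNet C E) (hO : O.IsOccurrenceNet) :
    ∀ (n : ℕ) (𝒞 : Set E) (hfin : 𝒞.Finite), hfin.toFinset.card = n →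
      O.IsConfiguration 𝒞 →
      ∃ (l : List E) (M : C → ℕ), l.Nodup ∧ {e | e ∈ l} = 𝒞 ∧ O.FireSeq O.M0 l M := by
  intro n
  induction n with
  | zero =>
    intro 𝒞 hfin hcard _
    have h0 : 𝒞 = ∅ := by
      have := Finset.card_eq_zero.mp hcard
      rw [Set.Finite.toFinset_eq_empty] at this
      exact this
    refine ⟨[], O.M0, List.nodup_nil, ?_, FireSeq.nil _⟩
    rw [h0]; ext x; simp
  | succ n ih =>
    intro 𝒞 hfin hcard hconf
    have hne : hfin.toFinset.Nonempty := Finset.card_pos.mp (by omega)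
    obtain ⟨e, he, hmax⟩ := exists_maximal' O.elt
      (fun h1 h2 => Relation.TransGen.trans h1 h2)
      (fun a h => hO.acyclic _ h) hfin.toFinset hne
    have heC : e ∈ 𝒞 := hfin.mem_toFinset.mp he
    have hfin' : (𝒞 \ {e}).Finite := hfin.diff
    have hconf' : O.IsConfiguration (𝒞 \ {e}) := by
      constructor
      · intro a ha b hb
        refine ⟨hconf.1 a ha.1 b hb, ?_⟩
        intro hbe
        rw [Set.mem_singleton_iff] at hbe
        subst hbe
        exact hmax a (hfin.mem_toFinset.mpr ha.1) hb
      · intro a ha b hb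
        exact hconf.2 a ha.1 b hb.1
    have hcard' : hfin'.toFinset.card = n := by
      have heq : hfin'.toFinset = hfin.toFinset.erase e := by
        ext x
        simp [Set.mem_diff, Finset.mem_erase, And.comm]
      rw [heq, Finset.card_erase_of_mem he, hcard]
      omega
    obtain ⟨l, M, hnd, hset, hfs⟩ := ih (𝒞 \ {e}) hfin' hcard' hconf'
    have hM := markB' O hO (𝒞 \ {e}) hconf' l M hnd hset hfs
    have henab : O.enabled M e := by
      intro c hc
      have hcut : c ∈ O.Cut (𝒞 \ {e}) := by
        constructor
        · by_cases h0 : ∀ e'' : E, ¬ O.post e'' c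
          · left
            rw [hO.init_minimal c, if_pos h0]
          · right
            push_neg at h0
            obtain ⟨e0, hp0⟩ := h0
            have hlt : O.elt e0 e := elt_of_post_pre' O hp0 hc
            have he0C : e0 ∈ 𝒞 := hconf.1 e heC e0 hlt
            refine ⟨e0, ⟨he0C, ?_⟩, hp0⟩
            intro h
            rw [Set.mem_singleton_iff] at h
            subst h
            exact hO.acyclic _ hlt
        · rintro ⟨e', ⟨he'C, he'ne⟩, hpe'⟩
          rw [Set.mem_singleton_iff] at he'ne
          exact hconf.2 e heC e' he'C ⟨e, e', fun h => he'ne h.symm, ⟨c, hc, hpe'⟩,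
            Relation.ReflTransGen.refl, Relation.ReflTransGen.refl⟩
      rw [hM, Set.indicator_apply, if_pos hcut]
    have henl : e ∉ l := by
      intro h
      have : e ∈ 𝒞 \ {e} := hset ▸ h
      exact this.2 rfl
    refine ⟨l ++ [e], O.fire M e, ?_, ?_, ?_⟩
    · rw [List.nodup_append]
      exact ⟨hnd, List.nodup_singleton e, by simpa [List.disjoint_singleton] using fun a ha (hae : a = e) => henl (hae ▸ ha)⟩
    · ext x
      simp only [Set.mem_setOf_eq, List.mem_append, List.mem_singleton]
      constructor
      · rintro (hx | rfl)
        · exact (hset ▸ hx : x ∈ 𝒞 \ {e}).1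
        · exact heC
      · intro hx
        by_cases hxe : x = e
        · exact Or.inr hxe
        · refine Or.inl ?_
          have hx' : x ∈ {e | e ∈ l} := by rw [hset]; exact ⟨hx, hxe⟩
          exact hx'
    · exact fireSeq_append' hfs (FireSeq.cons henab (FireSeq.nil _))

/-- Backward direction: the event set of any nodup firing sequence is a configuration. -/
private lemma conf_of_fireseq' (O : PetriNet C E) (hO : O.IsOccurrenceNet) :
    ∀ (l : List E) (M : C → ℕ), l.Nodup → O.FireSeq O.M0 l M →
      O.IsConfiguration {e | e ∈ l} := by
  intro l
  induction l using List.reverseRecOn with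
  | nil => intro M _ _; exact ⟨fun a ha => absurd ha (by simp), fun a ha => absurd ha (by simp)⟩
  | append_singleton l t ih =>
    intro M hnd hfs
    obtain ⟨M', hfs', hen, hMeq⟩ := fireSeq_snoc' hfs
    rw [List.nodup_append] at hnd
    obtain ⟨hnd', -, hdisj⟩ := hnd
    have htl : t ∉ l := fun h => hdisj _ h _ (List.mem_singleton_self t) rfl
    have hconf' := ih M' hnd' hfs'
    have hM' := markB' O hO {e | e ∈ l} hconf' l M' hnd' rfl hfs'
    have hcut : ∀ c, O.pre t c → c ∈ O.Cut {e | e ∈ l} := by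
      intro c hc
      have h1 := hen c hc
      rw [hM', Set.indicator_apply] at h1
      by_contra h
      rw [if_neg h] at h1
      omega
    -- any strict causal predecessor of `t` is already in `l`
    have hdc_t : ∀ e', O.elt e' t → e' ∈ l := by
      intro e' hlt
      obtain ⟨b, hb1, hb2⟩ := Relation.TransGen.tail'_iff.mp hlt
      obtain ⟨c, rfl, hptc⟩ : ∃ c, b = Sum.inl c ∧ O.pre t c := by
        cases b with
        | inl c => exact ⟨c, rfl, hb2⟩
        | inr e => exact absurd hb2 (by simp [PetriNet.flow])
      rcases Relation.ReflTransGen.cases_tail hb1 with heq | ⟨b', hb1', hb2'⟩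
      · exact absurd heq (by simp)
      obtain ⟨e'', rfl, hpost⟩ : ∃ e'', b' = Sum.inr e'' ∧ O.post e'' c := by
        cases b' with
        | inl c' => exact absurd hb2' (by simp [PetriNet.flow])
        | inr e'' => exact ⟨e'', rfl, hb2'⟩
      have hcc := hcut c hptc
      have he''l : e'' ∈ l := by
        rcases hcc.1 with h1 | ⟨e1, he1, hp1⟩
        · rw [hO.init_minimal c] at h1
          by_cases h0 : ∀ e : E, ¬ O.post e c
          · exact absurd hpost (h0 e'')
          · rw [if_neg h0] at h1; omega
        · rwa [hO.no_backward_branching c e'' e1 hpost hp1]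
      rcases (Relation.reflTransGen_iff_eq_or_transGen.mp hb1') with heq | htg
      · obtain rfl : e' = e'' := by injection heq with h; exact h.symm
        exact he''l
      · exact hconf'.1 e'' he''l e' htg
    have hDC : ∀ a ∈ ({e | e ∈ l ++ [t]} : Set E), ∀ e', O.elt e' a → e' ∈ l ++ [t] := by
      intro a ha e' hlt
      simp only [Set.mem_setOf_eq, List.mem_append, List.mem_singleton] at ha
      rw [List.mem_append, List.mem_singleton]
      rcases ha with ha | rfl
      · exact Or.inl (hconf'.1 a ha e' hlt)
      · exact Or.inl (hdc_t e' hlt)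
    have hmemle : ∀ a, a ∈ l ++ [t] → ∀ e', O.nle (Sum.inr e') (Sum.inr a) →
        e' ∈ l ++ [t] := by
      intro a ha e' hle
      rcases (Relation.reflTransGen_iff_eq_or_transGen.mp hle) with heq | htg
      · obtain rfl : e' = a := by injection heq with h; exact h.symm
        exact ha
      · exact hDC a ha e' htg
    refine ⟨hDC, ?_⟩
    intro a ha b hb hconfl
    obtain ⟨e1, e2, hne, ⟨c, hc1, hc2⟩, hle1, hle2⟩ := hconfl
    have he1 : e1 ∈ l ++ [t] := hmemle a ha e1 hle1
    have he2 : e2 ∈ l ++ [t] := hmemle b hb e2 hle2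
    rw [List.mem_append, List.mem_singleton] at he1 he2
    rcases he1 with he1 | rfl
    · rcases he2 with he2 | rfl
      · exact hconf'.2 e1 he1 e2 he2 ⟨e1, e2, hne, ⟨c, hc1, hc2⟩,
          Relation.ReflTransGen.refl, Relation.ReflTransGen.refl⟩
      · exact (hcut c hc2).2 ⟨e1, he1, hc1⟩
    · rcases he2 with he2 | rfl
      · exact (hcut c hc1).2 ⟨e2, he2, hc2⟩
      · exact hne rfl

end Aux

/-- Let `O` be an occurrence net, viewed as a safe Petri net with
initial marking `C0`, and let `𝒞` be a finite set of events.  Then `𝒞` is a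
configuration of `O` if and only if the elements of `𝒞` can be arranged into a sequence
`e_1, …, e_n` that is a firing sequence of `O` starting from `C0`; moreover, for a finite
configuration `𝒞` any such firing sequence leads from `C0` to the marking `Cut(𝒞)`. -/
theorem stmt14 {C E : Type} (O : PetriNet C E) (hO : O.IsOccurrenceNet)
    (𝒞 : Set E) (hfin : 𝒞.Finite) :
    (O.IsConfiguration 𝒞 ↔
      ∃ (l : List E) (M : C → ℕ),
        l.Nodup ∧ {e | e ∈ l} = 𝒞 ∧ O.FireSeq O.M0 l M) ∧
    (O.IsConfiguration 𝒞 →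
      ∀ (l : List E) (M : C → ℕ),
        l.Nodup → {e | e ∈ l} = 𝒞 → O.FireSeq O.M0 l M →
        M = (O.Cut 𝒞).indicator fun _ => 1) := by
  refine ⟨⟨?_, ?_⟩, ?_⟩
  · intro hconf
    exact key' O hO hfin.toFinset.card 𝒞 hfin rfl hconf
  · rintro ⟨l, M, hnd, hset, hfs⟩
    rw [← hset]
    exact conf_of_fireseq' O hO l M hnd hfs
  · intro hconf l M hnd hset hfs
    exact markB' O hO 𝒞 hconf l M hnd hset hfs
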